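/- Let c be a nonnegative Borel cost function, C>0, and let P_{Y|X} be a Markov kernel on ℝ satisfying E[c(Y−x) | X=x] ≤ C for every x∈ℝ. Fix k>0 and define the averaged kernel P̄_{Y|X} by P̄_{Y|X=x}(B) := (1/(2k)) ∫_{−k}^{k} P_{Y|X=x+z}(B+z) dz. Then P̄_{Y|X} is a Markov kernel on ℝ and satisfies the same cost constraint: E_{P̄}[c(Y−x) | X=x] ≤ C for every x∈ℝ. -/

import Mathlib

open MeasureTheory Filter Real Set
open scoped ENNReal NNReal Classical

noncomputable section

/-- Shift operator on Borel measures: `(shiftMeasure a μ) B = μ (B - a)`. -/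
def shiftMeasure (a : ℝ) (μ : Measure ℝ) : Measure ℝ := μ.map (· + a)

/-- Kullback–Leibler divergence between Borel measures on `ℝ`. -/
def KLdiv (μ ν : Measure ℝ) : ℝ≥0∞ :=
  if μ ≪ ν ∧ Integrable (llr μ ν) μ then ENNReal.ofReal (∫ x, llr μ ν x ∂μ) else ⊤

/-- Standing assumptions on the cost function. -/
structure IsCostFun (c : ℝ → ℝ) (α β : ℝ) : Prop where
  nonneg : ∀ x, 0 ≤ c x
  zero : c 0 = 0
  even : ∀ x, c (-x) = c x
  mono : ∀ x y : ℝ, |x| ≤ |y| → c x ≤ c y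
  continuous : Continuous c
  tail : Tendsto (fun x : ℝ => c x / (β * x ^ α)) atTop (nhds 1)


/-- The averaged kernel `P̄_{Y|X=x}(B) = (1/(2k)) ∫_{-k}^{k} P_{Y|X=x+z}(B+z) dz`. -/
def avgKernel (k : ℝ) (κ : ℝ → Measure ℝ) (x : ℝ) : Measure ℝ :=
  Measure.bind ((ENNReal.ofReal (2 * k))⁻¹ • volume.restrict (Set.Icc (-k) k))
    fun z => (κ (x + z)).map fun y => y - z

/-- The averaged kernel is again a Markov kernel and satisfies the same cost constraint. -/
theorem averaged_kernel_markov_and_cost (c : ℝ → ℝ) (hc0 : ∀ x, 0 ≤ c x) (hcm : Measurable c)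
    (C : ℝ) (hC : 0 < C) (κ : ℝ → Measure ℝ)
    (hκp : ∀ x, IsProbabilityMeasure (κ x))
    (hκm : ∀ B : Set ℝ, MeasurableSet B → Measurable fun x => κ x B)
    (hcost : ∀ x : ℝ, (∫⁻ y, ENNReal.ofReal (c (y - x)) ∂(κ x)) ≤ ENNReal.ofReal C)
    (k : ℝ) (hk : 0 < k) :
    (∀ x, IsProbabilityMeasure (avgKernel k κ x)) ∧
    (∀ B : Set ℝ, MeasurableSet B → Measurable fun x => avgKernel k κ x B) ∧
    (∀ x : ℝ, (∫⁻ y, ENNReal.ofReal (c (y - x)) ∂(avgKernel k κ x)) ≤ ENNReal.ofReal C) := by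
  set μ0 : Measure ℝ := (ENNReal.ofReal (2 * k))⁻¹ • volume.restrict (Set.Icc (-k) k) with hμ0
  have h2k : (0:ℝ) < 2 * k := by linarith
  have hμ0p : IsProbabilityMeasure μ0 := by
    constructor
    rw [hμ0, Measure.smul_apply, Measure.restrict_apply MeasurableSet.univ, Set.univ_inter,
      Real.volume_Icc]
    have : k - -k = 2 * k := by ring
    rw [this, smul_eq_mul, ENNReal.inv_mul_cancel (by simpa using h2k) ENNReal.ofReal_ne_top]
  have hμ0f : SFinite μ0 := inferInstance
  -- the kernel built from κ
  let κK : ProbabilityTheory.Kernel ℝ ℝ :=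
    ⟨κ, Measure.measurable_of_measurable_coe _ hκm⟩
  have hκKmk : ProbabilityTheory.IsMarkovKernel κK := ⟨hκp⟩
  -- the comapped kernel on pairs
  let η : ProbabilityTheory.Kernel (ℝ × ℝ) ℝ :=
    κK.comap (fun p : ℝ × ℝ => p.1 + p.2) (by fun_prop)
  have hηmk : ProbabilityTheory.IsMarkovKernel η := by
    constructor; intro p; exact hκp _
  have hsub : ∀ z : ℝ, Measurable fun y : ℝ => y - z := fun z => by fun_prop
  -- joint measurability of (x, z) ↦ ((κ (x+z)).map (· - z)) B
  have hg : ∀ B : Set ℝ, MeasurableSet B →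
      Measurable fun p : ℝ × ℝ => ((κ (p.1 + p.2)).map fun y => y - p.2) B := by
    intro B hB
    have hmeq : ∀ p : ℝ × ℝ, ((κ (p.1 + p.2)).map fun y => y - p.2) B
        = ∫⁻ y, B.indicator (fun _ => (1 : ℝ≥0∞)) (y - p.2) ∂(η p) := by
      intro p
      rw [Measure.map_apply (hsub p.2) hB]
      have : ∀ y : ℝ, B.indicator (fun _ => (1 : ℝ≥0∞)) (y - p.2)
          = ((fun y : ℝ => y - p.2) ⁻¹' B).indicator (fun _ => (1 : ℝ≥0∞)) y := by
        intro y
        by_cases h : y - p.2 ∈ B <;> simp [Set.indicator, h]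
      simp_rw [this]
      rw [lintegral_indicator ((hsub p.2) hB)]
      simp [η, ProbabilityTheory.Kernel.comap_apply, κK]
    simp_rw [hmeq]
    have hind : Measurable (B.indicator (fun _ => (1 : ℝ≥0∞))) :=
      measurable_const.indicator hB
    exact Measurable.lintegral_kernel_prod_right'
      (f := fun q : (ℝ × ℝ) × ℝ => B.indicator (fun _ => (1 : ℝ≥0∞)) (q.2 - q.1.2))
      (hind.comp (by fun_prop))
  -- measurability of z ↦ (κ (x+z)).map (· - z) for fixed x
  have hfx : ∀ x : ℝ, Measurable fun z => (κ (x + z)).map fun y => y - z := by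
    intro x
    apply Measure.measurable_of_measurable_coe
    intro B hB
    exact (hg B hB).comp measurable_prodMk_left
  have hmapuniv : ∀ x z : ℝ, ((κ (x + z)).map fun y => y - z) Set.univ = 1 := by
    intro x z
    rw [Measure.map_apply (hsub z) MeasurableSet.univ]
    simp [measure_univ]
  refine ⟨?_, ?_, ?_⟩
  · intro x
    constructor
    rw [avgKernel, Measure.bind_apply MeasurableSet.univ (hfx x).aemeasurable]
    simp_rw [hmapuniv x]
    rw [lintegral_const, one_mul]
    exact hμ0p.measure_univ
  · intro B hB
    have : (fun x => avgKernel k κ x B)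
        = fun x => ∫⁻ z, ((κ (x + z)).map fun y => y - z) B ∂μ0 := by
      funext x
      rw [avgKernel, Measure.bind_apply hB (hfx x).aemeasurable]
    rw [this]
    exact (hg B hB).lintegral_prod_right'
  · intro x
    have hF : Measurable fun y : ℝ => ENNReal.ofReal (c (y - x)) :=
      ENNReal.measurable_ofReal.comp (hcm.comp (hsub x))
    rw [avgKernel, Measure.lintegral_bind (hfx x).aemeasurable hF.aemeasurable]
    have hinner : ∀ z : ℝ,
        (∫⁻ y, ENNReal.ofReal (c (y - x)) ∂((κ (x + z)).map fun y => y - z))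
          ≤ ENNReal.ofReal C := by
      intro z
      rw [lintegral_map hF (hsub z)]
      have : ∀ y : ℝ, ENNReal.ofReal (c (y - z - x)) = ENNReal.ofReal (c (y - (x + z))) := by
        intro y; ring_nf
      simp_rw [this]
      exact hcost (x + z)
    calc (∫⁻ z, ∫⁻ y, ENNReal.ofReal (c (y - x))
            ∂((κ (x + z)).map fun y => y - z) ∂μ0)
        ≤ ∫⁻ _, ENNReal.ofReal C ∂μ0 := lintegral_mono hinner
      _ = ENNReal.ofReal C := by simp [measure_univ]

end
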